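/- In PG(2,q) with q an odd prime power, there are exactly q^2(q^2-1) proper conics passing through the point [1,0,0]. -/

import Mathlib

open Matrix

set_option linter.unusedSectionVars false
set_option maxHeartbeats 1000000

section Helpers

variable {F : Type} [Field F] [Fintype F]

lemma conj_apply (P A : Matrix (Fin 3) (Fin 3) F) (i j : Fin 3) :
    (Aᵀ * P * A) i j = (fun k => A k i) ⬝ᵥ P *ᵥ (fun k => A k j) := by
  simp [Matrix.mul_apply, Matrix.mulVec, dotProduct, Finset.sum_mul, Finset.mul_sum, mul_assoc]
  rw [Finset.sum_comm]

lemma conj_qf (P A : Matrix (Fin 3) (Fin 3) F) (v : Fin 3 → F) :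
    v ⬝ᵥ (Aᵀ * P * A) *ᵥ v = (A *ᵥ v) ⬝ᵥ P *ᵥ (A *ᵥ v) := by
  rw [mul_assoc, ← Matrix.mulVec_mulVec, ← Matrix.mulVec_mulVec,
    Matrix.dotProduct_mulVec v Aᵀ, Matrix.vecMul_transpose]

lemma Bsymm {M : Matrix (Fin 3) (Fin 3) F} (hMs : M.IsSymm) (v w : Fin 3 → F) :
    v ⬝ᵥ M *ᵥ w = w ⬝ᵥ M *ᵥ v := by
  have h := Matrix.vecMul_transpose M v
  rw [hMs] at h
  rw [Matrix.dotProduct_mulVec, h, dotProduct_comm]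

lemma qf_eval (M : Matrix (Fin 3) (Fin 3) F) (v w : Fin 3 → F) :
    v ⬝ᵥ M *ᵥ w =
      v 0 * (M 0 0 * w 0 + M 0 1 * w 1 + M 0 2 * w 2) +
      v 1 * (M 1 0 * w 0 + M 1 1 * w 1 + M 1 2 * w 2) +
      v 2 * (M 2 0 * w 0 + M 2 1 * w 1 + M 2 2 * w 2) := by
  simp [Matrix.mulVec, dotProduct, Fin.sum_univ_three]

/-- The key injectivity lemma. -/
lemma key (h2 : (2:F) ≠ 0) {M N : Matrix (Fin 3) (Fin 3) F}
    (hMs : M.IsSymm) (hMd : IsUnit M.det) (hM00 : M 0 0 = 0)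
    (hNs : N.IsSymm)
    (hZ : ∀ v : Fin 3 → F, v ⬝ᵥ M *ᵥ v = 0 ↔ v ⬝ᵥ N *ᵥ v = 0) :
    ∃ δ : F, N = δ • M := by
  classical
  set e0 : Fin 3 → F := ![1,0,0] with he0
  have he00 : e0 0 = 1 := rfl
  have he01 : e0 1 = 0 := rfl
  have he02 : e0 2 = 0 := rfl
  have hfe0 : e0 ⬝ᵥ M *ᵥ e0 = 0 := by rw [qf_eval]; simp [he00, he01, he02, hM00]
  have hrow : ¬ (∀ j, M 0 j = 0) := by
    intro h
    rw [isUnit_iff_ne_zero] at hMd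
    exact hMd (Matrix.det_eq_zero_of_row_eq_zero 0 h)
  push_neg at hrow
  obtain ⟨j, hj⟩ := hrow
  set u1 : Fin 3 → F := Pi.single j (M 0 j)⁻¹ with hu1
  have hBu1 : e0 ⬝ᵥ M *ᵥ u1 = 1 := by
    rw [hu1, Matrix.mulVec_single]
    simp [he0, dotProduct, Fin.sum_univ_three]
    exact mul_inv_cancel₀ hj
  set u : Fin 3 → F := u1 - ((u1 ⬝ᵥ M *ᵥ u1)/2) • e0 with hu
  have hBu : e0 ⬝ᵥ M *ᵥ u = 1 := by
    rw [hu]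
    simp only [Matrix.mulVec_sub, Matrix.mulVec_smul, dotProduct_sub, dotProduct_smul,
      smul_eq_mul]
    rw [hfe0, hBu1]; ring
  have hfu : u ⬝ᵥ M *ᵥ u = 0 := by
    rw [hu]
    simp only [Matrix.mulVec_sub, Matrix.mulVec_smul, sub_dotProduct, smul_dotProduct,
      dotProduct_sub, dotProduct_smul, smul_eq_mul]
    rw [hfe0, hBu1, Bsymm hMs u1 e0, hBu1]
    field_simp
    ring
  have hu12 : ¬ (u 1 = 0 ∧ u 2 = 0) := by
    rintro ⟨h1, h12⟩
    rw [qf_eval] at hBu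
    rw [he00, he01, he02, h1, h12, hM00] at hBu
    simp at hBu
  set z : Fin 3 → F := ![0, -(u 2), u 1] with hz
  have hzne : z ≠ 0 := by
    intro h
    have h1 := congrFun h 1
    have h2' := congrFun h 2
    simp [hz] at h1 h2'
    exact hu12 ⟨h2', h1⟩
  set w : Fin 3 → F := M⁻¹ *ᵥ z with hw
  have hMw : M *ᵥ w = z := by
    rw [hw, Matrix.mulVec_mulVec, Matrix.mul_nonsing_inv _ hMd, Matrix.one_mulVec]
  have hwne : w ≠ 0 := by
    intro h
    rw [h, Matrix.mulVec_zero] at hMw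
    exact hzne hMw.symm
  have hBe0w : e0 ⬝ᵥ M *ᵥ w = 0 := by
    rw [hMw, dotProduct]
    simp [Fin.sum_univ_three, he00, he01, he02, hz]
  have hBuw : u ⬝ᵥ M *ᵥ w = 0 := by
    rw [hMw, dotProduct]
    simp [Fin.sum_univ_three, hz]
    ring
  set a : F := w ⬝ᵥ M *ᵥ w with ha
  set A : Matrix (Fin 3) (Fin 3) F := Matrix.of (fun i j => ![e0, u, w] j i) with hA
  have hcol : ∀ i : Fin 3, (fun k => A k i) = ![e0, u, w] i := by
    intro i; funext k; simp [hA]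
  have hAmul : ∀ v : Fin 3 → F, A *ᵥ v = v 0 • e0 + v 1 • u + v 2 • w := by
    intro v
    funext i
    simp [hA, Matrix.mulVec, dotProduct, Fin.sum_univ_three]
    ring
  have hlin : ∀ (x : Fin 3 → F) (p q r : F),
      x ⬝ᵥ M *ᵥ (p • e0 + q • u + r • w)
        = p * (x ⬝ᵥ M *ᵥ e0) + q * (x ⬝ᵥ M *ᵥ u) + r * (x ⬝ᵥ M *ᵥ w) := by
    intro x p q r
    simp only [Matrix.mulVec_add, Matrix.mulVec_smul, dotProduct_add, dotProduct_smul,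
      smul_eq_mul]
  have hAdet : IsUnit A.det := by
    rw [isUnit_iff_ne_zero]
    intro hdet
    obtain ⟨v, hv, hAv0⟩ := Matrix.exists_mulVec_eq_zero_iff.2 hdet
    rw [hAmul] at hAv0
    have h1 : v 1 = 0 := by
      have := congrArg (fun y => e0 ⬝ᵥ M *ᵥ y) hAv0
      simp only [Matrix.mulVec_zero, dotProduct_zero] at this
      rw [hlin, hfe0, hBu, hBe0w] at this
      simpa using this
    have h0 : v 0 = 0 := by
      have := congrArg (fun y => u ⬝ᵥ M *ᵥ y) hAv0
      simp only [Matrix.mulVec_zero, dotProduct_zero] at this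
      rw [hlin, Bsymm hMs u e0, hBu, hfu, hBuw] at this
      simpa using this
    have h22 : v 2 = 0 := by
      rw [h0, h1] at hAv0
      simp only [zero_smul, zero_add] at hAv0
      rcases smul_eq_zero.1 hAv0 with h | h
      · exact h
      · exact absurd h hwne
    apply hv
    funext i
    fin_cases i <;> assumption
  have hATu : IsUnit Aᵀ := by
    rw [Matrix.isUnit_iff_isUnit_det, Matrix.det_transpose]; exact hAdet
  have hAu : IsUnit A := (Matrix.isUnit_iff_isUnit_det A).2 hAdet
  have hGa : ∀ i j : Fin 3, (Aᵀ * M * A) i j = (![e0,u,w] i) ⬝ᵥ M *ᵥ (![e0,u,w] j) := by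
    intro i j; rw [conj_apply]; simp only [hcol]
  have hG : Aᵀ * M * A = !![0,1,0;1,0,0;0,0,a] := by
    ext i j
    rw [hGa]
    fin_cases i <;> fin_cases j <;>
      simp only [Matrix.cons_val_zero, Matrix.cons_val_one, Matrix.head_cons,
        Matrix.cons_val_two, Matrix.tail_cons, Matrix.cons_val', Matrix.empty_val',
        Matrix.cons_val_fin_one, Fin.mk_zero, Fin.mk_one]
    · exact hfe0
    · exact hBu
    · exact hBe0w
    · rw [Bsymm hMs]; exact hBu
    · exact hfu
    · exact hBuw
    · rw [Bsymm hMs]; exact hBe0w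
    · rw [Bsymm hMs]; exact hBuw
    · rfl
  have hGdet : IsUnit (!![0,1,0;1,0,0;0,0,a] : Matrix (Fin 3) (Fin 3) F).det := by
    rw [← hG, Matrix.det_mul, Matrix.det_mul, Matrix.det_transpose]
    exact (hAdet.mul hMd).mul hAdet
  have hane : a ≠ 0 := by
    rw [isUnit_iff_ne_zero] at hGdet
    intro h
    apply hGdet
    rw [Matrix.det_fin_three]
    simp [h, Matrix.vecHead, Matrix.vecTail]
  set N' : Matrix (Fin 3) (Fin 3) F := Aᵀ * N * A with hN'def
  have hN'sym : N'.IsSymm := by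
    rw [Matrix.IsSymm, hN'def, Matrix.transpose_mul, Matrix.transpose_mul,
      Matrix.transpose_transpose, hNs, mul_assoc]
  have h10 : N' 1 0 = N' 0 1 := by
    have := congrFun (congrFun hN'sym 0) 1
    simpa [Matrix.transpose_apply] using this
  have h20 : N' 2 0 = N' 0 2 := by
    have := congrFun (congrFun hN'sym 0) 2
    simpa [Matrix.transpose_apply] using this
  have h21 : N' 2 1 = N' 1 2 := by
    have := congrFun (congrFun hN'sym 1) 2
    simpa [Matrix.transpose_apply] using this
  have hZ' : ∀ v : Fin 3 → F,
      v ⬝ᵥ (!![0,1,0;1,0,0;0,0,a] : Matrix (Fin 3) (Fin 3) F) *ᵥ v = 0 ↔ v ⬝ᵥ N' *ᵥ v = 0 := by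
    intro v
    rw [← hG, hN'def, conj_qf, conj_qf]
    exact hZ _
  have evalG : ∀ v : Fin 3 → F,
      v ⬝ᵥ (!![0,1,0;1,0,0;0,0,a] : Matrix (Fin 3) (Fin 3) F) *ᵥ v
        = 2*(v 0 * v 1) + a * (v 2 * v 2) := by
    intro v
    rw [qf_eval]
    simp [Matrix.vecHead, Matrix.vecTail]
    ring
  have evalN' : ∀ v : Fin 3 → F, v ⬝ᵥ N' *ᵥ v
      = N' 0 0 * (v 0 * v 0) + N' 1 1 * (v 1 * v 1) + N' 2 2 * (v 2 * v 2)
        + 2 * N' 0 1 * (v 0 * v 1) + 2 * N' 0 2 * (v 0 * v 2) + 2 * N' 1 2 * (v 1 * v 2) := by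
    intro v
    rw [qf_eval, h10, h20, h21]
    ring
  have hal : N' 0 0 = 0 := by
    have h := (hZ' ![1,0,0]).1 (by rw [evalG]; simp)
    rw [evalN'] at h
    simpa using h
  have hbe : N' 1 1 = 0 := by
    have h := (hZ' ![0,1,0]).1 (by rw [evalG]; simp)
    rw [evalN'] at h
    simpa using h
  have hze : N' 1 2 = 0 := by
    by_contra hz12
    have hgv : (![0, -(N' 2 2)/(2 * N' 1 2), 1] : Fin 3 → F) ⬝ᵥ N' *ᵥ (![0, -(N' 2 2)/(2 * N' 1 2), 1] : Fin 3 → F) = 0 := by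
      rw [evalN', hbe]
      simp only [Matrix.cons_val_zero, Matrix.cons_val_one, Matrix.head_cons,
        Matrix.cons_val_two, Matrix.tail_cons]
      field_simp
      ring
    have hfv := (hZ' _).2 hgv
    rw [evalG] at hfv
    simp at hfv
    exact hane hfv
  have hep : N' 0 2 = 0 := by
    by_contra hz02
    have hgv : (![-(N' 2 2)/(2 * N' 0 2), 0, 1] : Fin 3 → F) ⬝ᵥ N' *ᵥ (![-(N' 2 2)/(2 * N' 0 2), 0, 1] : Fin 3 → F) = 0 := by
      rw [evalN', hal]
      simp only [Matrix.cons_val_zero, Matrix.cons_val_one, Matrix.head_cons,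
        Matrix.cons_val_two, Matrix.tail_cons]
      field_simp
      ring
    have hfv := (hZ' _).2 hgv
    rw [evalG] at hfv
    simp at hfv
    exact hane hfv
  have hga : N' 2 2 = a * N' 0 1 := by
    have hfv : (![1, -(a/2), 1] : Fin 3 → F) ⬝ᵥ
        (!![0,1,0;1,0,0;0,0,a] : Matrix (Fin 3) (Fin 3) F) *ᵥ (![1, -(a/2), 1] : Fin 3 → F) = 0 := by
      rw [evalG]
      simp only [Matrix.cons_val_zero, Matrix.cons_val_one, Matrix.head_cons,
        Matrix.cons_val_two, Matrix.tail_cons]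
      field_simp
      ring
    have hgv := (hZ' _).1 hfv
    rw [evalN', hal, hbe, hze, hep] at hgv
    simp only [Matrix.cons_val_zero, Matrix.cons_val_one, Matrix.head_cons,
      Matrix.cons_val_two, Matrix.tail_cons] at hgv
    field_simp at hgv
    have h' : N' 2 2 * 2 * 2 = a * N' 0 1 * 2 * 2 := by linear_combination hgv
    exact mul_right_cancel₀ h2 (mul_right_cancel₀ h2 h')
  have hNG : N' = (N' 0 1) • (!![0,1,0;1,0,0;0,0,a] : Matrix (Fin 3) (Fin 3) F) := by
    ext i j
    fin_cases i <;> fin_cases j <;>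
      simp [Matrix.smul_apply, smul_eq_mul, Matrix.vecHead, Matrix.vecTail] <;>
      first
        | exact hal
        | exact hbe
        | exact hze
        | exact hep
        | (rw [h10]) | (rw [h20]; exact hep) | (rw [h21]; exact hze)
        | (rw [hga]; ring)
  refine ⟨N' 0 1, ?_⟩
  have heq : Aᵀ * (N * A) = Aᵀ * ((N' 0 1 • M) * A) := by
    rw [← mul_assoc, ← mul_assoc, ← hN'def, Matrix.mul_smul, Matrix.smul_mul, hG]
    exact hNG
  have heq2 := hATu.mul_left_cancel heq
  exact hAu.mul_right_cancel heq2

end Helpers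

/-- The zero set in `PG(2,q)` of the quadratic form associated to a symmetric matrix `M`. -/
def conicSet {F : Type} [Field F] (M : Matrix (Fin 3) (Fin 3) F) :
    Set (Projectivization F (Fin 3 → F)) :=
  {p | p.rep ⬝ᵥ M.mulVec p.rep = 0}

/-- A proper conic: the zero set of a quadratic form with invertible symmetric matrix. -/
def IsProperConic {F : Type} [Field F] (S : Set (Projectivization F (Fin 3 → F))) : Prop :=
  ∃ M : Matrix (Fin 3) (Fin 3) F, M.IsSymm ∧ IsUnit M.det ∧ S = conicSet M

section Part2

variable {F : Type} [Field F] [Fintype F]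

lemma mem_conicSet_mk (M : Matrix (Fin 3) (Fin 3) F) (v : Fin 3 → F) (hv : v ≠ 0) :
    Projectivization.mk F v hv ∈ conicSet M ↔ v ⬝ᵥ M *ᵥ v = 0 := by
  have hrep := Projectivization.mk_rep (Projectivization.mk F v hv)
  rw [Projectivization.mk_eq_mk_iff] at hrep
  obtain ⟨c, hc⟩ := hrep
  have : (Projectivization.mk F v hv) ∈ conicSet M
      ↔ (Projectivization.mk F v hv).rep ⬝ᵥ M *ᵥ (Projectivization.mk F v hv).rep = 0 :=
    Iff.rfl
  rw [this, ← hc, Units.smul_def]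
  simp only [smul_dotProduct, Matrix.mulVec_smul, dotProduct_smul, smul_eq_mul, mul_eq_zero]
  have hcne : (c : F) ≠ 0 := Units.ne_zero c
  tauto

lemma conicSet_eq_iff {M N : Matrix (Fin 3) (Fin 3) F} (h : conicSet M = conicSet N) :
    ∀ v : Fin 3 → F, v ⬝ᵥ M *ᵥ v = 0 ↔ v ⬝ᵥ N *ᵥ v = 0 := by
  intro v
  by_cases hv : v = 0
  · subst hv; simp
  · have := Set.ext_iff.mp h (Projectivization.mk F v hv)
    rwa [mem_conicSet_mk, mem_conicSet_mk] at this

lemma conicSet_smul (M : Matrix (Fin 3) (Fin 3) F) {δ : F} (hδ : δ ≠ 0) :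
    conicSet (δ • M) = conicSet M := by
  ext p
  simp [conicSet, Matrix.smul_mulVec, dotProduct_smul, smul_eq_mul, mul_eq_zero, hδ]

lemma point_mem_conicSet (M : Matrix (Fin 3) (Fin 3) F)
    (h1 : (![1, 0, 0] : Fin 3 → F) ≠ 0) :
    Projectivization.mk F (![1, 0, 0] : Fin 3 → F) h1 ∈ conicSet M ↔ M 0 0 = 0 := by
  rw [mem_conicSet_mk, qf_eval]
  simp

/-- counting lemma -/
lemma cardL {α : Type} [Fintype α] (g : α → F) (a : F) (ha : a ≠ 0) :
    {p : α × F | a * p.2 + g p.1 ≠ 0}.ncard = Fintype.card α * (Fintype.card F - 1) := by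
  classical
  rw [← Nat.card_coe_set_eq]
  have e : ↥{p : α × F | a * p.2 + g p.1 ≠ 0} ≃ α × {t : F // t ≠ 0} :=
    { toFun := fun p => ⟨p.1.1, ⟨a * p.1.2 + g p.1.1, p.2⟩⟩
      invFun := fun q => ⟨(q.1, (q.2.1 - g q.1) / a), by
        simp only [Set.mem_setOf_eq]
        field_simp
        simpa using q.2.2⟩
      left_inv := by
        rintro ⟨⟨x, t⟩, h⟩
        simp only [Subtype.mk.injEq, Prod.mk.injEq]
        refine ⟨trivial, ?_⟩
        field_simp
        ring
      right_inv := by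
        rintro ⟨x, ⟨t, ht⟩⟩
        simp only [Prod.mk.injEq, Subtype.mk.injEq]
        refine ⟨trivial, ?_⟩
        field_simp
        ring }
  rw [Nat.card_congr e, Nat.card_prod, Nat.card_eq_fintype_card, Nat.card_eq_fintype_card]
  congr 1
  rw [Fintype.card_subtype_compl (p := fun t : F => t = 0),
    Fintype.card_subtype_eq (0 : F)]

def phiA (x : (F × F × F) × F) : Matrix (Fin 3) (Fin 3) F :=
  !![0, 1, x.1.1; 1, x.1.2.1, x.1.2.2; x.1.1, x.1.2.2, x.2]

def phiB (x : (F × F) × F) : Matrix (Fin 3) (Fin 3) F :=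
  !![0, 0, 1; 0, x.2, x.1.1; 1, x.1.1, x.1.2]

lemma phiA_symm (x : (F × F × F) × F) : (phiA x).IsSymm := by
  rw [Matrix.IsSymm]
  ext i j
  fin_cases i <;> fin_cases j <;> simp [phiA]

lemma phiB_symm (x : (F × F) × F) : (phiB x).IsSymm := by
  rw [Matrix.IsSymm]
  ext i j
  fin_cases i <;> fin_cases j <;> simp [phiB]

lemma phiA_det (x : (F × F × F) × F) :
    (phiA x).det = (-1) * x.2 + (2 * x.1.1 * x.1.2.2 - x.1.1 ^ 2 * x.1.2.1) := by
  rw [Matrix.det_fin_three]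
  simp [phiA, Matrix.vecHead, Matrix.vecTail]
  ring

lemma phiB_det (x : (F × F) × F) :
    (phiB x).det = (-1) * x.2 := by
  rw [Matrix.det_fin_three]
  simp [phiB, Matrix.vecHead, Matrix.vecTail]

lemma phiA_inj : Function.Injective (phiA (F := F)) := by
  rintro ⟨⟨c, d, e⟩, f⟩ ⟨⟨c', d', e'⟩, f'⟩ h
  have h1 := congrFun (congrFun h 0) 2
  have h2 := congrFun (congrFun h 1) 1
  have h3 := congrFun (congrFun h 1) 2
  have h4 := congrFun (congrFun h 2) 2
  simp [phiA] at h1 h2 h3 h4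
  simp [h1, h2, h3, h4]

lemma phiB_inj : Function.Injective (phiB (F := F)) := by
  rintro ⟨⟨e, f⟩, d⟩ ⟨⟨e', f'⟩, d'⟩ h
  have h1 := congrFun (congrFun h 1) 1
  have h2 := congrFun (congrFun h 1) 2
  have h3 := congrFun (congrFun h 2) 2
  simp [phiB, Matrix.vecHead, Matrix.vecTail] at h1 h2 h3
  simp [h1, h2, h3]

end Part2


lemma aux_count (F : Type) [Field F] [Fintype F] (hq : Odd (Fintype.card F))
    (h1 : (![1, 0, 0] : Fin 3 → F) ≠ 0) :
    {S : Set (Projectivization F (Fin 3 → F)) | IsProperConic S ∧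
        Projectivization.mk F (![1, 0, 0] : Fin 3 → F) h1 ∈ S}.ncard
      = Fintype.card F ^ 2 * (Fintype.card F ^ 2 - 1) := by
  classical
  have h2 : (2 : F) ≠ 0 := by
    intro h
    have hdvd : ringChar F ∣ 2 := (ringChar.spec F 2).mp (by exact_mod_cast h)
    have hc2 : ringChar F = 2 := by
      rcases (Nat.dvd_prime Nat.prime_two).1 hdvd with h1 | h1
      · exact absurd h1 CharP.ringChar_ne_one
      · exact h1
    have heven := (FiniteField.even_card_iff_char_two).1 hc2
    rw [Nat.odd_iff] at hq
    omega
  set Sa : Set ((F × F × F) × F) := {x | IsUnit (phiA x).det} with hSa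
  set Sb : Set ((F × F) × F) := {x | IsUnit (phiB x).det} with hSb
  set Ta : Set (Matrix (Fin 3) (Fin 3) F) := phiA '' Sa with hTa
  set Tb : Set (Matrix (Fin 3) (Fin 3) F) := phiB '' Sb with hTb
  have hmemA : ∀ M ∈ Ta, M.IsSymm ∧ IsUnit M.det ∧ M 0 0 = 0 ∧ M 0 1 = 1 := by
    rintro M ⟨x, hx, rfl⟩
    exact ⟨phiA_symm x, hx, by simp [phiA], by simp [phiA]⟩
  have hmemB : ∀ M ∈ Tb, M.IsSymm ∧ IsUnit M.det ∧ M 0 0 = 0 ∧ M 0 1 = 0 ∧ M 0 2 = 1 := by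
    rintro M ⟨x, hx, rfl⟩
    exact ⟨phiB_symm x, hx, by simp [phiB], by simp [phiB], by simp [phiB]⟩
  have hset : {S : Set (Projectivization F (Fin 3 → F)) | IsProperConic S ∧
      Projectivization.mk F (![1, 0, 0] : Fin 3 → F) h1 ∈ S} = conicSet '' (Ta ∪ Tb) := by
    ext S
    constructor
    · rintro ⟨⟨M, hMs, hMd, rfl⟩, hP⟩
      have hM00 : M 0 0 = 0 := (point_mem_conicSet M h1).1 hP
      have h10 : M 1 0 = M 0 1 := hMs.apply 0 1
      have h20 : M 2 0 = M 0 2 := hMs.apply 0 2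
      have h21 : M 2 1 = M 1 2 := hMs.apply 1 2
      have hbc : ¬(M 0 1 = 0 ∧ M 0 2 = 0) := by
        rintro ⟨hb, hc⟩
        rw [isUnit_iff_ne_zero] at hMd
        apply hMd
        apply Matrix.det_eq_zero_of_row_eq_zero 0
        intro j; fin_cases j <;> assumption
      by_cases hb : M 0 1 = 0
      · have hc : M 0 2 ≠ 0 := fun h => hbc ⟨hb, h⟩
        set δ : F := (M 0 2)⁻¹ with hδdef
        have hδ : δ ≠ 0 := inv_ne_zero hc
        have hinv : δ * M 0 2 = 1 := inv_mul_cancel₀ hc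
        set M' : Matrix (Fin 3) (Fin 3) F := δ • M with hM'
        have hM'eq : phiB ((M' 1 2, M' 2 2), M' 1 1) = M' := by
          ext i j
          fin_cases i <;> fin_cases j <;>
            simp [phiB, hM', Matrix.smul_apply, smul_eq_mul, Matrix.vecHead, Matrix.vecTail,
              hM00, hb, h10, h20, h21, hinv]
        have hM'det : IsUnit M'.det := by
          rw [hM', Matrix.det_smul]
          exact ((isUnit_iff_ne_zero).2 (pow_ne_zero _ hδ)).mul hMd
        refine ⟨M', Or.inr ⟨((M' 1 2, M' 2 2), M' 1 1), ?_, hM'eq⟩, ?_⟩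
        · show IsUnit (phiB _).det
          rw [hM'eq]
          exact hM'det
        · rw [hM', conicSet_smul M hδ]
      · set δ : F := (M 0 1)⁻¹ with hδdef
        have hδ : δ ≠ 0 := inv_ne_zero hb
        have hinv : δ * M 0 1 = 1 := inv_mul_cancel₀ hb
        set M' : Matrix (Fin 3) (Fin 3) F := δ • M with hM'
        have hM'eq : phiA ((M' 0 2, M' 1 1, M' 1 2), M' 2 2) = M' := by
          ext i j
          fin_cases i <;> fin_cases j <;>
            simp [phiA, hM', Matrix.smul_apply, smul_eq_mul, Matrix.vecHead, Matrix.vecTail,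
              hM00, h10, h20, h21, hinv]
        have hM'det : IsUnit M'.det := by
          rw [hM', Matrix.det_smul]
          exact ((isUnit_iff_ne_zero).2 (pow_ne_zero _ hδ)).mul hMd
        refine ⟨M', Or.inl ⟨((M' 0 2, M' 1 1, M' 1 2), M' 2 2), ?_, hM'eq⟩, ?_⟩
        · show IsUnit (phiA _).det
          rw [hM'eq]
          exact hM'det
        · rw [hM', conicSet_smul M hδ]
    · rintro ⟨M, hM, rfl⟩
      rcases hM with hA | hB
      · obtain ⟨s1, s2, s3, _⟩ := hmemA M hA
        exact ⟨⟨M, s1, s2, rfl⟩, (point_mem_conicSet M h1).2 s3⟩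
      · obtain ⟨s1, s2, s3, _⟩ := hmemB M hB
        exact ⟨⟨M, s1, s2, rfl⟩, (point_mem_conicSet M h1).2 s3⟩
  have hdisj : Disjoint Ta Tb := by
    rw [Set.disjoint_left]
    rintro M hA hB
    have e1 := (hmemA M hA).2.2.2
    have e2 := (hmemB M hB).2.2.2.1
    rw [e1] at e2
    exact one_ne_zero e2
  have hinj : Set.InjOn conicSet (Ta ∪ Tb) := by
    rintro M₁ hM₁ M₂ hM₂ hC
    have hzz := conicSet_eq_iff hC
    have p1 : M₁.IsSymm ∧ IsUnit M₁.det ∧ M₁ 0 0 = 0 ∧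
        (M₁ 0 1 = 1 ∨ (M₁ 0 1 = 0 ∧ M₁ 0 2 = 1)) := by
      rcases hM₁ with h | h
      · obtain ⟨a1, a2, a3, a4⟩ := hmemA _ h; exact ⟨a1, a2, a3, Or.inl a4⟩
      · obtain ⟨a1, a2, a3, a4, a5⟩ := hmemB _ h; exact ⟨a1, a2, a3, Or.inr ⟨a4, a5⟩⟩
    have p2 : M₂.IsSymm ∧ (M₂ 0 1 = 1 ∨ (M₂ 0 1 = 0 ∧ M₂ 0 2 = 1)) := by
      rcases hM₂ with h | h
      · obtain ⟨a1, _, _, a4⟩ := hmemA _ h; exact ⟨a1, Or.inl a4⟩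
      · obtain ⟨a1, _, _, a4, a5⟩ := hmemB _ h; exact ⟨a1, Or.inr ⟨a4, a5⟩⟩
    obtain ⟨δ, hδ⟩ := key h2 p1.1 p1.2.1 p1.2.2.1 p2.1 hzz
    have e01 : M₂ 0 1 = δ * M₁ 0 1 := by rw [hδ]; simp
    have e02 : M₂ 0 2 = δ * M₁ 0 2 := by rw [hδ]; simp
    have hδ1 : δ = 1 := by
      rcases p1.2.2.2 with hn1 | hn1 <;> rcases p2.2 with hn2 | hn2
      · rw [hn1, mul_one] at e01; rw [← e01, hn2]
      · exfalso
        rw [hn1, mul_one] at e01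
        rw [hn2.1] at e01
        rw [← e01, zero_mul] at e02
        rw [hn2.2] at e02
        exact one_ne_zero e02
      · exfalso
        rw [hn1.1, mul_zero] at e01
        rw [hn2] at e01
        exact one_ne_zero e01
      · rw [hn1.2, mul_one] at e02; rw [← e02, hn2.2]
    rw [hδ, hδ1]
    exact (one_smul F M₁).symm
  rw [hset, Set.ncard_image_of_injOn hinj,
    Set.ncard_union_eq hdisj (Set.toFinite _) (Set.toFinite _),
    hTa, hTb, Set.ncard_image_of_injOn (phiA_inj.injOn),
    Set.ncard_image_of_injOn (phiB_inj.injOn)]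
  have hSacard : Sa.ncard = Fintype.card (F × F × F) * (Fintype.card F - 1) := by
    have h := cardL (fun y : F × F × F => 2 * y.1 * y.2.2 - y.1 ^ 2 * y.2.1) (-1 : F)
      (neg_ne_zero.2 one_ne_zero)
    rw [← h]
    congr 1
    ext x
    simp only [hSa, Set.mem_setOf_eq, isUnit_iff_ne_zero, phiA_det]
  have hSbcard : Sb.ncard = Fintype.card (F × F) * (Fintype.card F - 1) := by
    have h := cardL (fun _ : F × F => (0 : F)) (-1 : F) (neg_ne_zero.2 one_ne_zero)
    rw [← h]
    congr 1
    ext x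
    simp only [hSb, Set.mem_setOf_eq, isUnit_iff_ne_zero, phiB_det]
    simp
  rw [hSacard, hSbcard]
  simp only [Fintype.card_prod]
  have hq1 : 1 ≤ Fintype.card F := Fintype.card_pos
  obtain ⟨k, hk⟩ : ∃ k, Fintype.card F = k + 1 := ⟨Fintype.card F - 1, by omega⟩
  rw [hk]
  have e1 : k + 1 - 1 = k := by omega
  have e2 : (k + 1) ^ 2 - 1 = k ^ 2 + 2 * k := by
    have : (k + 1) ^ 2 = k ^ 2 + 2 * k + 1 := by ring
    omega
  rw [e1, e2]
  ring

/-- In `PG(2,q)`, `q` an odd prime power, there are exactly `q^2 * (q^2-1)` proper conics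
through the point `[1,0,0]`. -/
theorem num_proper_conics_through_one_point
    (F : Type) [Field F] [Fintype F] (hq : Odd (Fintype.card F)) :
    {S : Set (Projectivization F (Fin 3 → F)) | IsProperConic S ∧
        Projectivization.mk F (![1, 0, 0] : Fin 3 → F)
          (by intro h; simpa using congrFun h 0) ∈ S}.ncard
      = Fintype.card F ^ 2 * (Fintype.card F ^ 2 - 1) := by
  exact aux_count F hq _
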